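/- arXiv:2302.09203 — 4 statements merged into one kernel-verified Lean document; each statement's English description precedes it below -/
import Mathlib

section
/- Stationarity of the discrete upwind flux implies concentration at the zero of the drift: suppose g_k = r(L* - z_k) with z_k = kΔz, r > 0, and L* = k₀Δz for some k₀ ∈ {0,…,N_z}. Let nonnegative ρ_k (k = 0,…,N_z, with ghost values ρ_{-1} = ρ_{N_z+1} = 0) satisfy J_{k+1/2} = J_{k-1/2} for all k where J_{k+1/2} = g_k⁺·ρ_k - g_{k+1}⁻·ρ_{k+1} and zero boundary fluxes. Then ρ_k = 0 for all k ≠ k₀. -/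
/-- Stationarity of the discrete upwind flux implies concentration at the zero of
the drift. Here `g k = r (k₀ - k) Δz` (i.e. `g(z_k) = r (L* - z_k)` with
`z_k = kΔz`, `L* = k₀Δz`). `J k` denotes the interface flux `J_{k+1/2}` given by
the upwind formula with `u⁺ = max u 0`, `u⁻ = max (-u) 0`; the boundary fluxes
`J_{-1/2}`, `J_{N_z+1/2}` vanish, the ghost values `ρ_{-1} = ρ_{N_z+1} = 0`, and
the fluxes are stationary: `J_{k+1/2} = J_{k-1/2}` for all `k`. Then `ρ_k = 0`
for every `k ≠ k₀`. -/
theorem stmt_7 (Nz k₀ : ℕ) (hk₀ : k₀ ≤ Nz) (Δz r : ℝ) (hΔz : 0 < Δz) (hr : 0 < r)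
    (g : ℤ → ℝ) (hg : ∀ k : ℤ, g k = r * (((k₀ : ℤ) : ℝ) - (k : ℝ)) * Δz)
    (ρ : ℤ → ℝ)
    (hnn : ∀ k : ℤ, 0 ≤ k → k ≤ (Nz : ℤ) → 0 ≤ ρ k)
    (hghostL : ρ (-1) = 0) (hghostR : ρ ((Nz : ℤ) + 1) = 0)
    (J : ℤ → ℝ)
    (hJ : ∀ k : ℤ, 0 ≤ k → k ≤ (Nz : ℤ) - 1 →
      J k = max (g k) 0 * ρ k - max (-(g (k + 1))) 0 * ρ (k + 1))
    (hJL : J (-1) = 0) (hJR : J (Nz : ℤ) = 0)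
    (hstat : ∀ k : ℤ, 0 ≤ k → k ≤ (Nz : ℤ) → J k = J (k - 1)) :
    ∀ k : ℤ, 0 ≤ k → k ≤ (Nz : ℤ) → k ≠ (k₀ : ℤ) → ρ k = 0 := by
  have key : ∀ n : ℕ, ∀ k : ℤ, k = -1 + n → k ≤ (Nz : ℤ) → J k = 0 := by
    intro n
    induction n with
    | zero => intro k hkeq _; rw [show k = -1 by omega]; exact hJL
    | succ m ih =>
      intro k hkeq hk'
      rw [hstat k (by omega) hk']
      exact ih (k - 1) (by omega) (by omega)
  have hJ0 : ∀ k : ℤ, -1 ≤ k → k ≤ (Nz : ℤ) → J k = 0 := fun k hk hk' =>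
    key (k + 1).toNat k (by omega) hk'
  intro k hk hkN hkne
  rcases lt_or_gt_of_ne hkne with hlt | hgt
  · have hflux := hJ k hk (by omega)
    rw [hJ0 k (by omega) (by omega)] at hflux
    have hg1 : 0 ≤ g (k + 1) := by
      rw [hg]
      have h2 : ((k + 1 : ℤ) : ℝ) ≤ ((k₀ : ℤ) : ℝ) := by
        exact_mod_cast (show k + 1 ≤ (k₀ : ℤ) by omega)
      have h3 : (0 : ℝ) ≤ ((k₀ : ℤ) : ℝ) - ((k + 1 : ℤ) : ℝ) := by linarith
      positivity
    have hmax1 : max (-(g (k + 1))) 0 = 0 := max_eq_right (by linarith)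
    have hgk : 0 < g k := by
      rw [hg]
      have h2 : (k : ℝ) < ((k₀ : ℤ) : ℝ) := by exact_mod_cast hlt
      have h3 : (0 : ℝ) < ((k₀ : ℤ) : ℝ) - (k : ℝ) := by linarith
      positivity
    have hmax2 : max (g k) 0 = g k := max_eq_left hgk.le
    rw [hmax1, hmax2] at hflux
    have h4 : g k * ρ k = 0 := by linarith
    rcases mul_eq_zero.mp h4 with h | h
    · exact absurd h hgk.ne'
    · exact h
  · have hflux := hJ (k - 1) (by omega) (by omega)
    rw [hJ0 (k - 1) (by omega) (by omega), sub_add_cancel] at hflux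
    have hgk1 : g (k - 1) ≤ 0 := by
      rw [hg]
      have h2 : ((k₀ : ℤ) : ℝ) ≤ ((k - 1 : ℤ) : ℝ) := by
        exact_mod_cast (show (k₀ : ℤ) ≤ k - 1 by omega)
      have h3 : ((k₀ : ℤ) : ℝ) - ((k - 1 : ℤ) : ℝ) ≤ 0 := by linarith
      nlinarith [mul_nonneg hr.le hΔz.le]
    have hmax1 : max (g (k - 1)) 0 = 0 := max_eq_right hgk1
    have hgk : g k < 0 := by
      rw [hg]
      have h2 : ((k₀ : ℤ) : ℝ) < (k : ℝ) := by exact_mod_cast hgt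
      have h3 : ((k₀ : ℤ) : ℝ) - (k : ℝ) < 0 := by linarith
      nlinarith [mul_pos hr hΔz]
    have hmax2 : max (-(g k)) 0 = -(g k) := max_eq_left (by linarith)
    rw [hmax1, hmax2] at hflux
    have h4 : -(g k) * ρ k = 0 := by linarith
    rcases mul_eq_zero.mp h4 with h | h
    · exact absurd h (by linarith)
    · exact h
end

section
/- Combining conservation and concentration: under the hypotheses of the previous two statements (stationary fluxes, zero boundary fluxes, nonnegative ρ*_k obtained from ρ_k by the conservative upwind update), the limit profile satisfies ρ*_k = (∑_{j=0}^{N_z} ρ_j)·δ_{k=k₀}, i.e., it equals the total initial mass concentrated at the grid point k₀ where the drift vanishes. -/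
/-- Conservation + concentration (Lemma 3.1): if nonnegative `ρ*` is obtained
from `ρ` by the conservative upwind update with stationary fluxes
(`J*_{k+1/2} = J*_{k-1/2}`), no-flux boundary conditions and zero ghost values,
with drift `g k = r (k₀ - k) Δz` vanishing exactly at index `k₀`, then
`ρ*_k = (∑_{j=0}^{N_z} ρ_j) δ_{k = k₀}`. Here `J k` denotes `J*_{k+1/2}`. -/
theorem stmt_8 (Nz k₀ : ℕ) (hk₀ : k₀ ≤ Nz) (Δz Δt κ r : ℝ)
    (hΔz : 0 < Δz) (hΔt : 0 < Δt) (hκ : 0 < κ) (hr : 0 < r)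
    (g : ℤ → ℝ) (hg : ∀ k : ℤ, g k = r * (((k₀ : ℤ) : ℝ) - (k : ℝ)) * Δz)
    (ρ ρs : ℤ → ℝ)
    (hnn : ∀ k : ℤ, 0 ≤ k → k ≤ (Nz : ℤ) → 0 ≤ ρs k)
    (hghostL : ρs (-1) = 0) (hghostR : ρs ((Nz : ℤ) + 1) = 0)
    (J : ℤ → ℝ)
    (hJ : ∀ k : ℤ, 0 ≤ k → k ≤ (Nz : ℤ) - 1 →
      J k = max (g k) 0 * ρs k - max (-(g (k + 1))) 0 * ρs (k + 1))
    (hJL : J (-1) = 0) (hJR : J (Nz : ℤ) = 0)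
    (hupd : ∀ k : ℤ, 0 ≤ k → k ≤ (Nz : ℤ) →
      ρs k = ρ k - (κ * Δt / Δz) * (J k - J (k - 1)))
    (hstat : ∀ k : ℤ, 0 ≤ k → k ≤ (Nz : ℤ) → J k = J (k - 1)) :
    ∀ k : ℤ, 0 ≤ k → k ≤ (Nz : ℤ) →
      ρs k = (∑ j ∈ Finset.range (Nz + 1), ρ (j : ℤ)) *
        (if k = (k₀ : ℤ) then 1 else 0) := by
  -- Step 1: J vanishes on [0, Nz]
  have hJzero : ∀ n : ℕ, (n : ℤ) ≤ (Nz : ℤ) → J (n : ℤ) = 0 := by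
    intro n
    induction n with
    | zero => intro _; simpa using (hstat 0 le_rfl (by exact_mod_cast Nat.zero_le Nz)).trans hJL
    | succ m ih =>
      intro h
      have hm : (m : ℤ) ≤ (Nz : ℤ) := by push_cast at h ⊢; omega
      have := hstat ((m : ℤ) + 1) (by positivity) (by push_cast at h ⊢; omega)
      simp only [add_sub_cancel_right] at this
      rw [show ((m + 1 : ℕ) : ℤ) = (m : ℤ) + 1 by push_cast; ring, this]
      exact ih hm
  have hJz : ∀ k : ℤ, 0 ≤ k → k ≤ (Nz : ℤ) → J k = 0 := by
    intro k hk hk'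
    obtain ⟨n, rfl⟩ := Int.eq_ofNat_of_zero_le hk
    exact hJzero n hk'
  -- Step 2: ρs vanishes off k₀
  have hoff : ∀ k : ℤ, 0 ≤ k → k ≤ (Nz : ℤ) → k ≠ (k₀ : ℤ) → ρs k = 0 := by
    intro k hk hk' hne
    rcases lt_or_gt_of_ne hne with hlt | hgt
    · -- k < k₀ : use J k = 0
      have hkNz : k ≤ (Nz : ℤ) - 1 := by
        have : (k₀ : ℤ) ≤ (Nz : ℤ) := by exact_mod_cast hk₀
        omega
      have h0 := hJ k hk hkNz
      rw [hJz k hk (by omega)] at h0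
      have hgk : 0 < g k := by
        rw [hg]
        have : (k : ℝ) < (k₀ : ℤ) := by exact_mod_cast hlt
        have : 0 < ((k₀ : ℤ) : ℝ) - (k : ℝ) := by linarith
        positivity
      have hgk1 : 0 ≤ g (k + 1) := by
        rw [hg]
        have h1 : (k : ℝ) + 1 ≤ ((k₀ : ℤ) : ℝ) := by exact_mod_cast hlt
        push_cast at h1 ⊢
        nlinarith [mul_nonneg (mul_nonneg hr.le (by linarith : (0:ℝ) ≤ (k₀:ℝ) - ((k:ℝ) + 1))) hΔz.le]
      rw [max_eq_left hgk.le, max_eq_right (by linarith), zero_mul, sub_zero] at h0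
      have := hgk.ne'
      nlinarith [hnn k hk hk']
    · -- k > k₀ : use J (k-1) = 0
      have hk1 : 0 ≤ k - 1 := by
        have : (0 : ℤ) ≤ (k₀ : ℤ) := by positivity
        omega
      have h0 := hJ (k - 1) hk1 (by omega)
      rw [hJz (k - 1) hk1 (by omega), sub_add_cancel] at h0
      have hgk : g k < 0 := by
        rw [hg]
        have : ((k₀ : ℤ) : ℝ) < (k : ℝ) := by exact_mod_cast hgt
        have h1 : ((k₀ : ℤ) : ℝ) - (k : ℝ) < 0 := by linarith
        have := mul_pos hr (neg_pos.mpr h1)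
        nlinarith
      have hgk1 : g (k - 1) ≤ 0 := by
        rw [hg]
        have h2 : (k₀ : ℤ) ≤ k - 1 := by omega
        have h3 : ((k₀ : ℤ) : ℝ) ≤ (k : ℝ) - 1 := by exact_mod_cast h2
        push_cast at h3 ⊢
        nlinarith [mul_nonneg (mul_nonneg hr.le (by linarith : (0:ℝ) ≤ ((k:ℝ) - 1) - (k₀:ℝ))) hΔz.le]
      rw [max_eq_right hgk1, zero_mul, zero_sub, max_eq_left (by linarith)] at h0
      have hx : 0 < -g k := by linarith
      nlinarith [hnn k hk hk']
  -- Step 3: ρs = ρ on [0, Nz]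
  have heq : ∀ k : ℤ, 0 ≤ k → k ≤ (Nz : ℤ) → ρs k = ρ k := by
    intro k hk hk'
    rw [hupd k hk hk', hstat k hk hk']
    ring
  -- Step 4: total sum
  have hsum : (∑ j ∈ Finset.range (Nz + 1), ρ (j : ℤ)) = ρs (k₀ : ℤ) := by
    have : (∑ j ∈ Finset.range (Nz + 1), ρ (j : ℤ)) =
        ∑ j ∈ Finset.range (Nz + 1), ρs (j : ℤ) := by
      apply Finset.sum_congr rfl
      intro j hj
      have hj' : (j : ℤ) ≤ (Nz : ℤ) := by
        have := Finset.mem_range.mp hj; omega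
      exact (heq j (by positivity) hj').symm
    rw [this]
    apply Finset.sum_eq_single_of_mem k₀ (Finset.mem_range.mpr (by omega))
    intro j hj hjne
    apply hoff j (by positivity) (by have := Finset.mem_range.mp hj; omega)
    exact_mod_cast hjne
  -- Conclusion
  intro k hk hk'
  by_cases h : k = (k₀ : ℤ)
  · subst h; rw [if_pos rfl, mul_one, hsum]
  · rw [if_neg h, mul_zero, hoff k hk hk' h]
end

section
/- For the linearized PBDM (k_V = r) around (ρ̄^z, h̄, 0), the characteristic matrix is block lower-triangular enough that its spectrum consists exactly of λ₁ = −K·D(L(h̄)), λ₂ = −K·D(z) + κr − ik₃κr·g̃(z, h̄), λ₃ = −K·D_h − β, λ₄ = −K·D_n − γϱ̄; in particular Re(λ₂) = −K·D(z) + κr > 0 whenever K·D(z) < κr, so the system is unstable for small K. -/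
lemma spec_aux (l1 l2 l3 l4 : ℂ) (a12 a14 a31 a32 : ℂ) :
    spectrum ℂ
      (!![l1, a12, 0, a14;
          0, l2, 0, 0;
          a31, a32, l3, 0;
          0, 0, 0, l4] : Matrix (Fin 4) (Fin 4) ℂ)
      = {l1, l2, l3, l4} := by
  ext μ
  rw [spectrum.mem_iff, Matrix.isUnit_iff_isUnit_det, isUnit_iff_ne_zero, not_not]
  have h1 : (algebraMap ℂ (Matrix (Fin 4) (Fin 4) ℂ)) μ -
      !![l1, a12, 0, a14; 0, l2, 0, 0; a31, a32, l3, 0; 0, 0, 0, l4] =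
      !![μ - l1, -a12, 0, -a14; 0, μ - l2, 0, 0; -a31, -a32, μ - l3, 0; 0, 0, 0, μ - l4] := by
    rw [Matrix.algebraMap_eq_diagonal]
    ext i j
    fin_cases i <;> fin_cases j <;> simp [Matrix.diagonal]
  have hdet : (!![μ - l1, -a12, 0, -a14; 0, μ - l2, 0, 0;
      -a31, -a32, μ - l3, 0; 0, 0, 0, μ - l4] : Matrix (Fin 4) (Fin 4) ℂ).det
      = (μ - l1) * ((μ - l2) * ((μ - l3) * (μ - l4))) := by
    rw [Matrix.det_succ_row_zero]
    norm_num [Fin.sum_univ_succ, Matrix.det_fin_three, show (Fin.castSucc 2 : Fin 4) = 2 from rfl]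
    simp [Matrix.cons_val]
    exact Or.inl (by ring)
  rw [h1, hdet, mul_eq_zero, mul_eq_zero, mul_eq_zero, sub_eq_zero, sub_eq_zero,
    sub_eq_zero, sub_eq_zero]
  simp [Set.mem_insert_iff]

/-- Spectrum of the characteristic matrix of the linearized PBDM (`k_V = r`) at
`(ρ̄ᶻ, h̄, 0)`: since `a₁₃ = 0` (and `n̄ = 0`), the spectrum consists exactly of
`λ₁ = -K D(L(h̄))`, `λ₂ = -K D(z) + κr - i k₃ κ r g̃(z,h̄)`, `λ₃ = -K D_h - β`,
`λ₄ = -K D_n - γ ϱ̄`; moreover `Re λ₂ = -K D(z) + κ r > 0` whenever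
`K D(z) < κ r`, so the system is unstable for small `K`. Here `a12` and `aI`
denote the complex entries `a₁₂` and `α ∫_{Ω_θ} e^{i k₃ z} dz` of the matrix. -/
theorem stmt_18 (K κ r Dz DL Dh Dn β γ ϱbar ϱθ α k₃ gtilde : ℝ)
    (a12 aI : ℂ)
    (hK : 0 ≤ K) (hκ : 0 < κ) (hr : 0 < r) (hDz : 0 < Dz) (hDL : 0 < DL)
    (hDh : 0 < Dh) (hDn : 0 < Dn) (hβ : 0 < β) (hγ : 0 < γ) (hϱ : 0 < ϱbar) :
    spectrum ℂ
      (!![((-K * DL : ℝ) : ℂ), a12, 0, ((r * ϱθ : ℝ) : ℂ);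
          0, ((-K * Dz + κ * r : ℝ) : ℂ) - Complex.I * (k₃ * κ * r * gtilde : ℝ), 0, 0;
          ((α : ℝ) : ℂ), aI, ((-K * Dh - β : ℝ) : ℂ), 0;
          0, 0, 0, ((-K * Dn - γ * ϱbar : ℝ) : ℂ)] : Matrix (Fin 4) (Fin 4) ℂ)
      = {((-K * DL : ℝ) : ℂ),
         ((-K * Dz + κ * r : ℝ) : ℂ) - Complex.I * (k₃ * κ * r * gtilde : ℝ),
         ((-K * Dh - β : ℝ) : ℂ),
         ((-K * Dn - γ * ϱbar : ℝ) : ℂ)} ∧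
    (K * Dz < κ * r →
      0 < (((-K * Dz + κ * r : ℝ) : ℂ)
            - Complex.I * (k₃ * κ * r * gtilde : ℝ)).re) := by
  constructor
  · exact spec_aux _ _ _ _ a12 _ _ aI
  · intro h
    simp [Complex.sub_re, Complex.mul_re]
    linarith
end

section
/- The ADI discretization of the AHL equation preserves nonnegativity of the implicit step: if h^{m}_{i,j} ≥ 0 for all i, j, ϱ^m_{i,j} ≥ 0, α, β, D_h, Δt, Δx, Δy > 0, then the linear system (I − (Δt/2)D_h δ_xx + (Δt/2)β I) h^{m*} = h^m + (Δt/2)(D_h δ_yy h^m + α ϱ^m) has a unique solution h^{m*}, provided additionally Δt·D_h/Δy² ≤ 1 the right-hand side is nonnegative and hence h^{m*}_{i,j} ≥ 0 for all i, j. -/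
/-- Index of the left neighbor with reflecting (Neumann) boundary. -/
def prevIdx {n : ℕ} (i : Fin n) : Fin n :=
  ⟨i.val - 1, Nat.lt_of_le_of_lt (Nat.sub_le _ _) i.isLt⟩

/-- Index of the right neighbor with reflecting (Neumann) boundary. -/
def nextIdx {n : ℕ} (i : Fin n) : Fin n :=
  ⟨min (i.val + 1) (n - 1), by have := i.isLt; omega⟩

/-- Discrete second difference in `x` with reflecting boundary. -/
noncomputable def dxx {Nx Ny : ℕ} (Δx : ℝ) (u : Fin Nx → Fin Ny → ℝ)
    (i : Fin Nx) (j : Fin Ny) : ℝ :=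
  (u (prevIdx i) j - 2 * u i j + u (nextIdx i) j) / Δx ^ 2

/-- Discrete second difference in `y` with reflecting boundary. -/
noncomputable def dyy {Nx Ny : ℕ} (Δy : ℝ) (u : Fin Nx → Fin Ny → ℝ)
    (i : Fin Nx) (j : Fin Ny) : ℝ :=
  (u i (prevIdx j) - 2 * u i j + u i (nextIdx j)) / Δy ^ 2

/-- The implicit half-step operator as a linear map. -/
noncomputable def adiL {Nx Ny : ℕ} (c b Δx : ℝ) :
    (Fin Nx → Fin Ny → ℝ) →ₗ[ℝ] (Fin Nx → Fin Ny → ℝ) where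
  toFun u := fun i j => u i j - c * dxx Δx u i j + b * u i j
  map_add' u v := by
    funext i j
    simp only [dxx, Pi.add_apply]
    ring
  map_smul' r u := by
    funext i j
    simp only [dxx, Pi.smul_apply, smul_eq_mul, RingHom.id_apply]
    ring

/-- Discrete minimum principle for the implicit step. -/
lemma adi_min_principle {Nx Ny : ℕ} (c b Δx : ℝ) (hc : 0 < c) (hb : 0 < b)
    (hΔx : 0 < Δx) (u R : Fin Nx → Fin Ny → ℝ) (hR : ∀ i j, 0 ≤ R i j)
    (heq : ∀ i j, u i j - c * dxx Δx u i j + b * u i j = R i j) :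
    ∀ i j, 0 ≤ u i j := by
  intro i j
  obtain ⟨⟨i₀, j₀⟩, -, hmin⟩ := Finset.exists_min_image
    (Finset.univ ×ˢ Finset.univ) (fun p : Fin Nx × Fin Ny => u p.1 p.2)
    ⟨(i, j), by simp⟩
  have hmin' : ∀ i' j', u i₀ j₀ ≤ u i' j' := fun i' j' =>
    hmin (i', j') (by simp)
  have hdxx : 0 ≤ dxx Δx u i₀ j₀ := by
    have h1 := hmin' (prevIdx i₀) j₀
    have h2 := hmin' (nextIdx i₀) j₀
    have hx2 : 0 < Δx ^ 2 := by positivity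
    unfold dxx
    apply div_nonneg _ hx2.le
    linarith
  have h0 : 0 ≤ u i₀ j₀ := by
    have := heq i₀ j₀
    have hR0 := hR i₀ j₀
    nlinarith [mul_nonneg hc.le hdxx]
  exact le_trans h0 (hmin' i j)

/-- The first ADI half-step of the AHL equation preserves nonnegativity:
if `h^m ≥ 0`, `ϱ^m ≥ 0`, all the parameters are positive and `Δt D_h / Δy² ≤ 1`,
then the implicit linear system
`h* - (Δt/2) D_h δ_xx h* + (Δt/2) β h* = h^m + (Δt/2)(D_h δ_yy h^m + α ϱ^m)`
has a unique solution `h*`, and that solution is nonnegative. -/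
theorem stmt_19 {Nx Ny : ℕ} (Δt Δx Δy Dh α β : ℝ)
    (hΔt : 0 < Δt) (hΔx : 0 < Δx) (hΔy : 0 < Δy)
    (hDh : 0 < Dh) (hα : 0 < α) (hβ : 0 < β)
    (hCFL : Δt * Dh / Δy ^ 2 ≤ 1)
    (hm ϱm : Fin Nx → Fin Ny → ℝ)
    (hhm : ∀ i j, 0 ≤ hm i j) (hϱm : ∀ i j, 0 ≤ ϱm i j) :
    (∃! hs : Fin Nx → Fin Ny → ℝ, ∀ i j,
        hs i j - (Δt / 2) * Dh * dxx Δx hs i j + (Δt / 2) * β * hs i j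
          = hm i j + (Δt / 2) * (Dh * dyy Δy hm i j + α * ϱm i j)) ∧
    (∀ hs : Fin Nx → Fin Ny → ℝ,
      (∀ i j, hs i j - (Δt / 2) * Dh * dxx Δx hs i j + (Δt / 2) * β * hs i j
          = hm i j + (Δt / 2) * (Dh * dyy Δy hm i j + α * ϱm i j)) →
      ∀ i j, 0 ≤ hs i j) := by
  set c := (Δt / 2) * Dh with hc_def
  set b := (Δt / 2) * β with hb_def
  have hc : 0 < c := by positivity
  have hb : 0 < b := by positivity
  set R : Fin Nx → Fin Ny → ℝ :=
    fun i j => hm i j + (Δt / 2) * (Dh * dyy Δy hm i j + α * ϱm i j) with hR_def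
  -- The right-hand side is nonnegative thanks to the CFL condition.
  have hRpos : ∀ i j, 0 ≤ R i j := by
    intro i j
    have hy2 : 0 < Δy ^ 2 := by positivity
    have h1 := hhm i (prevIdx j)
    have h2 := hhm i (nextIdx j)
    have h3 := hhm i j
    have h4 := hϱm i j
    have hdyy : dyy Δy hm i j =
        (hm i (prevIdx j) - 2 * hm i j + hm i (nextIdx j)) / Δy ^ 2 := rfl
    have hCFL' : Δt * Dh ≤ Δy ^ 2 := by
      rwa [div_le_one hy2] at hCFL
    simp only [hR_def, hdyy]
    have key : 0 ≤ hm i j + (Δt / 2) * (Dh *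
        ((hm i (prevIdx j) - 2 * hm i j + hm i (nextIdx j)) / Δy ^ 2) + α * ϱm i j) := by
      have expand : hm i j + (Δt / 2) * (Dh *
          ((hm i (prevIdx j) - 2 * hm i j + hm i (nextIdx j)) / Δy ^ 2) + α * ϱm i j)
          = (1 - Δt * Dh / Δy ^ 2) * hm i j
            + (Δt * Dh / (2 * Δy ^ 2)) * (hm i (prevIdx j) + hm i (nextIdx j))
            + (Δt / 2) * (α * ϱm i j) := by
        field_simp
        ring
      rw [expand]
      have t1 : 0 ≤ (1 - Δt * Dh / Δy ^ 2) * hm i j := by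
        apply mul_nonneg _ h3
        linarith
      have t2 : 0 ≤ (Δt * Dh / (2 * Δy ^ 2)) * (hm i (prevIdx j) + hm i (nextIdx j)) := by
        apply mul_nonneg (by positivity) (by linarith)
      have t3 : 0 ≤ (Δt / 2) * (α * ϱm i j) := by positivity
      linarith
    exact key
  -- Injectivity of the operator via the minimum principle.
  have hinj : Function.Injective (adiL (Nx := Nx) (Ny := Ny) c b Δx) := by
    rw [injective_iff_map_eq_zero]
    intro u hu
    have hu' : ∀ i j, u i j - c * dxx Δx u i j + b * u i j = 0 := by
      intro i j
      exact congrFun (congrFun hu i) j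
    have h1 : ∀ i j, 0 ≤ u i j :=
      adi_min_principle c b Δx hc hb hΔx u 0 (fun _ _ => le_refl 0)
        (fun i j => by simpa using hu' i j)
    have hneg : (adiL (Nx := Nx) (Ny := Ny) c b Δx) (-u) = 0 := by
      rw [map_neg, hu, neg_zero]
    have hneg' : ∀ i j, (-u) i j - c * dxx Δx (-u) i j + b * (-u) i j = 0 := by
      intro i j
      exact congrFun (congrFun hneg i) j
    have h2 : ∀ i j, 0 ≤ -u i j :=
      adi_min_principle c b Δx hc hb hΔx (-u) 0 (fun _ _ => le_refl 0)
        (fun i j => by simpa using hneg' i j)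
    funext i j
    show u i j = 0
    have ha := h1 i j
    have hb2 := h2 i j
    linarith
  have hsurj : Function.Surjective (adiL (Nx := Nx) (Ny := Ny) c b Δx) :=
    (LinearMap.injective_iff_surjective).mp hinj
  obtain ⟨hs₀, hhs₀⟩ := hsurj R
  have hsol : ∀ hs : Fin Nx → Fin Ny → ℝ,
      (∀ i j, hs i j - (Δt / 2) * Dh * dxx Δx hs i j + (Δt / 2) * β * hs i j
          = hm i j + (Δt / 2) * (Dh * dyy Δy hm i j + α * ϱm i j))
      ↔ (adiL (Nx := Nx) (Ny := Ny) c b Δx) hs = R := by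
    intro hs
    constructor
    · intro h
      funext i j
      exact h i j
    · intro h i j
      exact congrFun (congrFun h i) j
  refine ⟨⟨hs₀, (hsol hs₀).mpr hhs₀, ?_⟩, ?_⟩
  · intro hs' h'
    exact hinj (((hsol hs').mp h').trans hhs₀.symm)
  · intro hs h
    exact adi_min_principle c b Δx hc hb hΔx hs R hRpos h
end
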